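/- Let A ⊆ [0,u] ⊆ G be a sub-MV-algebra of the segment of an abelian l-group G, and let A* be the subgroup generated by A, with the induced lattice order. Then (A*, u) is an abelian l-group with strong unit u: A* is closed under the lattice operations ⊓ and ⊔ of G, and u is a strong unit for A*. -/

import Mathlib

section Helpers

variable {G : Type*} [Lattice G] [AddCommGroup G] [CovariantClass G G (· + ·) (· ≤ ·)]

private lemma posPart_sub_eq' (x y : G) : (x - y)⁺ = x - x ⊓ y := by
  rw [posPart_def, sub_eq_add_neg x (x ⊓ y), neg_inf, add_sup, add_neg_cancel, sup_comm,
    ← sub_eq_add_neg]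

private lemma inf_add_le3 {a b c : G} (ha : 0 ≤ a) (hb : 0 ≤ b) (hc : 0 ≤ c) :
    a ⊓ (b + c) ≤ a ⊓ b + a ⊓ c := by
  have h : a ⊓ b + a ⊓ c = ((a + a) ⊓ (a + c)) ⊓ ((b + a) ⊓ (b + c)) := by
    rw [inf_add, add_inf, add_inf]
  rw [h]
  refine le_inf (le_inf ?_ ?_) (le_inf ?_ ?_)
  · exact inf_le_left.trans (le_add_of_nonneg_left ha)
  · exact inf_le_left.trans (le_add_of_nonneg_right hc)
  · exact inf_le_left.trans (le_add_of_nonneg_left hb)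
  · exact inf_le_right

private lemma pos_shift (x b : G) (hb : 0 ≤ b) : (x⁺ - b)⁺ = (x - b)⁺ := by
  rw [posPart_def x, sup_sub, posPart_def, posPart_def, sup_assoc, zero_sub]
  congr 1
  exact sup_eq_right.2 (neg_nonpos.2 hb)

private lemma keyC (h b r : G) (hr : 0 ≤ r) :
    (h + r - b)⁺ = (h - b)⁺ + (r - (b - h)⁺)⁺ := by
  set a' := (h - b)⁺ with ha'def
  have hb' : (b - h)⁺ = (h - b)⁻ := by rw [negPart_def, neg_sub, posPart_def]
  set z := r - (b - h)⁺ with hzdef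
  have e1 : a' + z = h + r - b := by
    have e : a' + z = (h - b)⁺ - (h - b)⁻ + r := by rw [hzdef, hb', ha'def]; abel
    rw [e, posPart_sub_negPart]; abel
  have e2 : a' + z = (a' + z⁺) - z⁻ := by
    rw [add_sub_assoc, posPart_sub_negPart]
  have e3 : (a' + z⁺) ⊓ z⁻ = 0 := by
    refine le_antisymm ?_ (le_inf (add_nonneg (posPart_nonneg _) (posPart_nonneg _)) (negPart_nonneg _))
    have hz3 : z⁻ ≤ (h - b)⁻ := by
      rw [← hb', hzdef, negPart_def, neg_sub]
      exact sup_le (sub_le_self _ hr) (posPart_nonneg _)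
    calc (a' + z⁺) ⊓ z⁻ = z⁻ ⊓ (a' + z⁺) := inf_comm _ _
      _ ≤ z⁻ ⊓ a' + z⁻ ⊓ z⁺ := inf_add_le3 (negPart_nonneg _) (posPart_nonneg _) (posPart_nonneg _)
      _ ≤ (h - b)⁻ ⊓ (h - b)⁺ + z⁻ ⊓ z⁺ := add_le_add (inf_le_inf hz3 le_rfl) le_rfl
      _ = 0 := by
          rw [inf_comm ((h - b)⁻) _, posPart_inf_negPart_eq_zero, inf_comm,
            posPart_inf_negPart_eq_zero, add_zero]
  calc (h + r - b)⁺ = (a' + z)⁺ := by rw [e1]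
    _ = (a' + z⁺) - (a' + z⁺) ⊓ z⁻ := by rw [e2, posPart_sub_eq']
    _ = a' + z⁺ := by rw [e3, sub_zero]

end Helpers

/-- If `A` is a sub-MV-algebra of the segment `[0,u]` of an abelian l-group `G`,
then the subgroup `A*` generated by `A` is closed under the lattice operations
of `G`, and `u` is a strong unit for `A*`. -/
theorem subMV_closure_is_lu_group {G : Type*} [Lattice G] [AddCommGroup G]
    [CovariantClass G G (· + ·) (· ≤ ·)] (u : G) (hu : 0 < u)
    (A : Set G) (hA : A ⊆ Set.Icc (0 : G) u)
    (h0 : (0 : G) ∈ A) (h1 : u ∈ A)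
    (hoplus : ∀ a ∈ A, ∀ b ∈ A, u ⊓ (a + b) ∈ A)
    (hneg : ∀ a ∈ A, u - a ∈ A) :
    (∀ x ∈ AddSubgroup.closure A, ∀ y ∈ AddSubgroup.closure A,
        x ⊔ y ∈ AddSubgroup.closure A ∧ x ⊓ y ∈ AddSubgroup.closure A) ∧
    (∀ x ∈ AddSubgroup.closure A, ∃ n : ℕ, x ⊔ (-x) ≤ n • u) := by
  -- A is closed under truncated subtraction `(h - b)⁺`
  have hominus : ∀ h ∈ A, ∀ b ∈ A, (h - b)⁺ ∈ A := by
    intro h hh b hb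
    have t3 : u - u ⊓ (u - h + b) ∈ A := hneg _ (hoplus _ (hneg h hh) b hb)
    have e : (h - b)⁺ = u - u ⊓ (u - h + b) := by
      have e' := posPart_sub_eq' u (u - h + b)
      rwa [show u - (u - h + b) = h - b by abel] at e'
    rwa [e]
  -- Claim C: subtracting one element of A from a sum of elements of A,
  -- the positive part is again a sum of elements of A.
  have claimC : ∀ l : List G, (∀ a ∈ l, a ∈ A) → ∀ b ∈ A,
      ∃ l' : List G, (∀ a ∈ l', a ∈ A) ∧ (l.sum - b)⁺ = l'.sum := by
    intro l
    induction l with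
    | nil =>
      intro _ b hb
      refine ⟨[], by simp, ?_⟩
      rw [List.sum_nil, zero_sub]
      exact posPart_eq_zero.2 (neg_nonpos.2 (hA hb).1)
    | cons h r ih =>
      intro hl b hb
      have hh : h ∈ A := hl h List.mem_cons_self
      have hr : ∀ a ∈ r, a ∈ A := fun a ha => hl a (List.mem_cons_of_mem h ha)
      have hrpos : 0 ≤ r.sum := List.sum_nonneg fun a ha => (hA (hr a ha)).1
      obtain ⟨l'', hl'', hsum⟩ := ih hr ((b - h)⁺) (hominus b hb h hh)
      refine ⟨(h - b)⁺ :: l'', ?_, ?_⟩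
      · intro a ha
        rcases List.mem_cons.1 ha with h' | h'
        · exact h' ▸ hominus h hh b hb
        · exact hl'' a h'
      · rw [List.sum_cons, List.sum_cons, keyC h b r.sum hrpos, hsum]
  -- every sum of elements of A lies in the closure
  have hsumA : ∀ l : List G, (∀ a ∈ l, a ∈ A) → l.sum ∈ AddSubgroup.closure A :=
    fun l hl => AddSubgroup.list_sum_mem _ (fun x hx => AddSubgroup.subset_closure (hl x hx))
  -- positive parts of differences of sums of A-elements are sums of A-elements
  have sumC : ∀ lt : List G, (∀ a ∈ lt, a ∈ A) → ∀ ls : List G, (∀ a ∈ ls, a ∈ A) →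
      ∃ l' : List G, (∀ a ∈ l', a ∈ A) ∧ (ls.sum - lt.sum)⁺ = l'.sum := by
    intro lt
    induction lt with
    | nil =>
      intro _ ls hls
      refine ⟨ls, hls, ?_⟩
      rw [List.sum_nil, sub_zero]
      exact posPart_eq_self.2 (List.sum_nonneg fun a ha => (hA (hls a ha)).1)
    | cons b lt ih =>
      intro hbl ls hls
      have hb : b ∈ A := hbl b List.mem_cons_self
      have hlt : ∀ a ∈ lt, a ∈ A := fun a ha => hbl a (List.mem_cons_of_mem b ha)
      obtain ⟨w, hw, hws⟩ := ih hlt ls hls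
      obtain ⟨l', hl', hl's⟩ := claimC w hw b hb
      refine ⟨l', hl', ?_⟩
      rw [List.sum_cons, show ls.sum - (b + lt.sum) = ls.sum - lt.sum - b by abel,
        ← pos_shift _ b (hA hb).1, hws, hl's]
  -- representation of closure elements
  have hrep : ∀ x ∈ AddSubgroup.closure A, ∃ ls lt : List G,
      (∀ a ∈ ls, a ∈ A) ∧ (∀ a ∈ lt, a ∈ A) ∧ x = ls.sum - lt.sum := by
    intro x hx
    refine AddSubgroup.closure_induction ?_ ?_ ?_ ?_ hx
    · intro a ha; exact ⟨[a], [], by simpa using ha, by simp, by simp⟩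
    · exact ⟨[], [], by simp, by simp, by simp⟩
    · rintro x y _ _ ⟨ls₁, lt₁, h₁, h₂, h₃⟩ ⟨ls₂, lt₂, h₄, h₅, h₆⟩
      refine ⟨ls₁ ++ ls₂, lt₁ ++ lt₂, ?_, ?_, ?_⟩
      · intro a ha; rcases List.mem_append.1 ha with h' | h'
        exacts [h₁ a h', h₄ a h']
      · intro a ha; rcases List.mem_append.1 ha with h' | h'
        exacts [h₂ a h', h₅ a h']
      · rw [List.sum_append, List.sum_append, h₃, h₆]; abel
    · rintro x _ ⟨ls, lt, h₁, h₂, h₃⟩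
      exact ⟨lt, ls, h₂, h₁, by rw [h₃]; abel⟩
  -- positive part closed
  have hpos : ∀ x ∈ AddSubgroup.closure A, x⁺ ∈ AddSubgroup.closure A := by
    intro x hx
    obtain ⟨ls, lt, hh₁, hh₂, hh₃⟩ := hrep x hx
    obtain ⟨l', hl', hl's⟩ := sumC lt hh₂ ls hh₁
    rw [hh₃, hl's]
    exact hsumA l' hl'
  have hsup : ∀ x ∈ AddSubgroup.closure A, ∀ y ∈ AddSubgroup.closure A,
      x ⊔ y ∈ AddSubgroup.closure A := by
    intro x hx y hy
    have e : x ⊔ y = (x - y)⁺ + y := by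
      rw [posPart_def, sup_add, zero_add, sub_add_cancel]
    rw [e]
    exact add_mem (hpos _ (sub_mem hx hy)) hy
  refine ⟨fun x hx y hy => ⟨hsup x hx y hy, ?_⟩, ?_⟩
  · have e : x ⊓ y = -(-x ⊔ -y) := by rw [← neg_inf, neg_neg]
    rw [e]
    exact neg_mem (hsup _ (neg_mem hx) _ (neg_mem hy))
  · intro x hx
    refine AddSubgroup.closure_induction ?_ ?_ ?_ ?_ hx
    · intro a ha
      refine ⟨1, ?_⟩
      rw [one_smul]
      exact sup_le (hA ha).2 ((neg_nonpos.2 (hA ha).1).trans hu.le)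
    · exact ⟨0, by simp⟩
    · rintro x y _ _ ⟨n, hn⟩ ⟨m, hm⟩
      refine ⟨n + m, ?_⟩
      calc (x + y) ⊔ -(x + y) = |x + y| := rfl
        _ ≤ |x| + |y| := abs_add_le x y
        _ ≤ n • u + m • u := add_le_add hn hm
        _ = (n + m) • u := (add_nsmul u n m).symm
    · rintro x _ ⟨n, hn⟩
      exact ⟨n, by rw [neg_neg, sup_comm]; exact hn⟩
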